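/- Let 0 < α ≤ 1 with 2Γ(2α+1)² ≠ Γ(3α+1), and define c₂^α = 1/(2Γ(α+1)), c₃^α = 1/(4Γ(α+1)), a₂₁ = 1/(2Γ(α+1)²), a₃₁ = (Γ(α+1)²Γ(2α+1) + 2Γ(2α+1)² − Γ(3α+1))/(4Γ(α+1)²(2Γ(2α+1)² − Γ(3α+1))), a₃₂ = −Γ(2α+1)/(4(2Γ(2α+1)² − Γ(3α+1))), w₁ = 8Γ(α+1)²Γ(2α+1)/Γ(3α+1) − 6Γ(α+1)²/Γ(2α+1) + 1/Γ(α+1), w₂ = 2Γ(α+1)²(4Γ(2α+1)² − Γ(3α+1))/(Γ(2α+1)Γ(3α+1)), w₃ = −8Γ(α+1)²(2Γ(2α+1)² − Γ(3α+1))/(Γ(2α+1)Γ(3α+1)). Then these values satisfy all six 3-stage order conditions: w₁+w₂+w₃ = 1/Γ(α+1); a₂₁ = c₂^α/Γ(α+1); w₂c₂^{2α} + w₃c₃^{2α} = Γ(2α+1)/Γ(3α+1); a₃₁ + a₃₂ = c₃^α/Γ(α+1); w₂c₂^α + w₃c₃^α = Γ(α+1)/Γ(2α+1); and w₃a₃₂c₂^α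 = Γ(α+1)/Γ(3α+1). -/

import Mathlib

/-- The tabulated coefficients of the 3-stage EFORK method satisfy all six order
conditions of order `3α`. Here `c2a`, `c3a` denote `c₂^α`, `c₃^α`. -/
theorem efork3_coefficients_satisfy_order_conditions
    (α : ℝ) (hα : 0 < α ∧ α ≤ 1)
    (hne : 2 * Real.Gamma (2 * α + 1) ^ 2 ≠ Real.Gamma (3 * α + 1))
    (c2a c3a a21 a31 a32 w1 w2 w3 : ℝ)
    (hc2 : c2a = 1 / (2 * Real.Gamma (α + 1)))
    (hc3 : c3a = 1 / (4 * Real.Gamma (α + 1)))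
    (ha21 : a21 = 1 / (2 * Real.Gamma (α + 1) ^ 2))
    (ha31 : a31 =
      (Real.Gamma (α + 1) ^ 2 * Real.Gamma (2 * α + 1) + 2 * Real.Gamma (2 * α + 1) ^ 2 -
          Real.Gamma (3 * α + 1)) /
        (4 * Real.Gamma (α + 1) ^ 2 *
          (2 * Real.Gamma (2 * α + 1) ^ 2 - Real.Gamma (3 * α + 1))))
    (ha32 : a32 = -Real.Gamma (2 * α + 1) /
        (4 * (2 * Real.Gamma (2 * α + 1) ^ 2 - Real.Gamma (3 * α + 1))))
    (hw1 : w1 = 8 * Real.Gamma (α + 1) ^ 2 * Real.Gamma (2 * α + 1) / Real.Gamma (3 * α + 1) -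
        6 * Real.Gamma (α + 1) ^ 2 / Real.Gamma (2 * α + 1) + 1 / Real.Gamma (α + 1))
    (hw2 : w2 = 2 * Real.Gamma (α + 1) ^ 2 *
        (4 * Real.Gamma (2 * α + 1) ^ 2 - Real.Gamma (3 * α + 1)) /
        (Real.Gamma (2 * α + 1) * Real.Gamma (3 * α + 1)))
    (hw3 : w3 = -(8 * Real.Gamma (α + 1) ^ 2 *
        (2 * Real.Gamma (2 * α + 1) ^ 2 - Real.Gamma (3 * α + 1))) /
        (Real.Gamma (2 * α + 1) * Real.Gamma (3 * α + 1))) :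
    w1 + w2 + w3 = 1 / Real.Gamma (α + 1) ∧
    a21 = c2a / Real.Gamma (α + 1) ∧
    w2 * c2a ^ 2 + w3 * c3a ^ 2 = Real.Gamma (2 * α + 1) / Real.Gamma (3 * α + 1) ∧
    a31 + a32 = c3a / Real.Gamma (α + 1) ∧
    w2 * c2a + w3 * c3a = Real.Gamma (α + 1) / Real.Gamma (2 * α + 1) ∧
    w3 * a32 * c2a = Real.Gamma (α + 1) / Real.Gamma (3 * α + 1) := by
  obtain ⟨h0, _⟩ := hα
  have h1 : Real.Gamma (α + 1) ≠ 0 := (Real.Gamma_pos_of_pos (by linarith)).ne'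
  have h2 : Real.Gamma (2 * α + 1) ≠ 0 := (Real.Gamma_pos_of_pos (by linarith)).ne'
  have h3 : Real.Gamma (3 * α + 1) ≠ 0 := (Real.Gamma_pos_of_pos (by linarith)).ne'
  have h4 : 2 * Real.Gamma (2 * α + 1) ^ 2 - Real.Gamma (3 * α + 1) ≠ 0 :=
    sub_ne_zero.mpr hne
  subst hc2 hc3 ha21 ha31 ha32 hw1 hw2 hw3
  have h5 : Real.Gamma (1 + α * 2) ^ 2 * 2 - Real.Gamma (1 + α * 3) ≠ 0 := by ring_nf at h4 ⊢; exact h4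
  have h6 : 2 * Real.Gamma (1 + α * 2) ^ 2 - Real.Gamma (1 + α * 3) ≠ 0 := by ring_nf at h4 ⊢; exact h4
  refine ⟨?_, ?_, ?_, ?_, ?_, ?_⟩ <;> field_simp <;> ring_nf <;> field_simp <;> ring
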